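/- arXiv:math/0203114 — 4 statements merged into one kernel-verified Lean document; each statement's English description precedes it below -/
import Mathlib

section
/- Let f_i = c_i t^{a_i}, 0 ≤ i ≤ n, be n+1 monomials in n variables over the field k, and suppose the i-th monomial factors as a product of two monomials, f_i = f_i'·f_i'', i.e. c_i = c_i'·c_i'' in k^× and a_i = a_i' + a_i'' in ℤ^n. Then the symbol is multiplicative in the i-th entry: [f_0,…,f_i'f_i'',…,f_n] = [f_0,…,f_i',…,f_n] · [f_0,…,f_i'',…,f_n], where on the right-hand side the i-th monomial of the collection is replaced by f_i' (resp. f_i''), all other monomials being unchanged. -/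
open Matrix

/-- The strictly increasing embedding `Fin m → Fin (m + 2)` that skips the values
of `i` and `j` (for `i < j`): used to delete rows `i` and `j` of a matrix. -/
def skip2 {m : ℕ} (i j : Fin (m + 2)) (r : Fin m) : Fin (m + 2) :=
  if r.val < i.val then ⟨r.val, by have := r.isLt; omega⟩
  else if r.val + 1 < j.val then ⟨r.val + 1, by have := r.isLt; omega⟩
  else ⟨r.val + 2, by have := r.isLt; omega⟩

/-- `B(A) = Σ_k Σ_{i<j} a_{ik} a_{jk} A^k_{ij}`, where `A^k_{ij}` is the determinant of
the matrix obtained from `A` by deleting rows `i`, `j` and column `k`. -/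
def Bcoef {m : ℕ} (A : Matrix (Fin (m + 2)) (Fin (m + 1)) ℤ) : ℤ :=
  ∑ c : Fin (m + 1), ∑ i : Fin (m + 2), ∑ j : Fin (m + 2),
    if i < j then A i c * A j c * (A.submatrix (skip2 i j) c.succAbove).det else 0

/-- The symbol `[c₀ t^{a₀}, …, c_{n} t^{a_n}] = (-1)^{B(A)} ∏ᵢ cᵢ^{(-1)ⁱ Aᵢ}` of `n + 1`
monomials in `n` variables (here `n = m + 1`), where `Aᵢ` is the determinant of the matrix
obtained from the exponent matrix `A` by deleting its `i`-th row. -/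
def monomialSymbol {k : Type*} [Field k] {m : ℕ}
    (c : Fin (m + 2) → kˣ) (A : Matrix (Fin (m + 2)) (Fin (m + 1)) ℤ) : kˣ :=
  (-1) ^ Bcoef A *
    ∏ i : Fin (m + 2), c i ^ ((-1 : ℤ) ^ (i : ℕ) * (A.submatrix i.succAbove id).det)

lemma skip2_ne_left {m : ℕ} {i j : Fin (m + 2)} (h : i < j) (r : Fin m) : skip2 i j r ≠ i := by
  rw [Fin.lt_def] at h
  simp only [skip2]
  split_ifs <;> simp only [Fin.ne_iff_vne] <;> omega

lemma skip2_ne_right {m : ℕ} {i j : Fin (m + 2)} (h : i < j) (r : Fin m) : skip2 i j r ≠ j := by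
  rw [Fin.lt_def] at h
  simp only [skip2]
  split_ifs <;> simp only [Fin.ne_iff_vne] <;> omega

lemma skip2_inj {m : ℕ} {i j : Fin (m + 2)} {r s : Fin m}
    (h : skip2 i j r = skip2 i j s) : r = s := by
  simp only [skip2] at h
  apply Fin.ext
  split_ifs at h <;> simp only [Fin.mk.injEq] at h <;> omega

lemma skip2_exists {m : ℕ} {i j t : Fin (m + 2)} (h : i < j) (ht1 : t ≠ i) (ht2 : t ≠ j) :
    ∃ r : Fin m, skip2 i j r = t := by
  rw [Fin.lt_def] at h
  rw [Fin.ne_iff_vne] at ht1 ht2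
  have hi := i.isLt; have hj := j.isLt; have htl := t.isLt
  refine ⟨⟨if t.val < i.val then t.val else if t.val < j.val then t.val - 1 else t.val - 2,
    by split_ifs <;> omega⟩, ?_⟩
  simp only [skip2]
  apply Fin.ext
  split_ifs <;> simp_all <;> omega

section
variable {m K : ℕ}

lemma sub_up (M : Matrix (Fin (m + 2)) (Fin (m + 1)) ℤ) (i : Fin (m + 2))
    (w : Fin (m + 1) → ℤ) (f : Fin K → Fin (m + 2)) (g : Fin K → Fin (m + 1))
    (r : Fin K) (hr : f r = i) (huniq : ∀ s, f s = i → s = r) :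
    (M.updateRow i w).submatrix f g = (M.submatrix f g).updateRow r (fun c => w (g c)) := by
  ext s c
  simp only [Matrix.submatrix_apply, Matrix.updateRow_apply]
  by_cases h : s = r
  · simp [h, hr]
  · rw [if_neg h, if_neg (fun H => h (huniq s H))]

lemma sub_noup (M : Matrix (Fin (m + 2)) (Fin (m + 1)) ℤ) (i : Fin (m + 2))
    (w : Fin (m + 1) → ℤ) (f : Fin K → Fin (m + 2)) (g : Fin K → Fin (m + 1))
    (hf : ∀ s, f s ≠ i) :
    (M.updateRow i w).submatrix f g = M.submatrix f g := by
  ext s c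
  simp [Matrix.updateRow_apply, hf s]

lemma det_sub_add (M : Matrix (Fin (m + 2)) (Fin (m + 1)) ℤ) (i : Fin (m + 2))
    (u v : Fin (m + 1) → ℤ) (f : Fin K → Fin (m + 2)) (g : Fin K → Fin (m + 1))
    (r : Fin K) (hr : f r = i) (huniq : ∀ s, f s = i → s = r) :
    ((M.updateRow i (u + v)).submatrix f g).det =
      ((M.updateRow i u).submatrix f g).det + ((M.updateRow i v).submatrix f g).det := by
  rw [sub_up M i (u + v) f g r hr huniq, sub_up M i u f g r hr huniq,
    sub_up M i v f g r hr huniq]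
  have h : (fun c => (u + v) (g c)) = (fun c => u (g c)) + (fun c => v (g c)) := by
    funext c; simp
  rw [h, Matrix.det_updateRow_add]

end

lemma Bcoef_add {m : ℕ} (A : Matrix (Fin (m + 2)) (Fin (m + 1)) ℤ) (i : Fin (m + 2))
    (a' a'' : Fin (m + 1) → ℤ) (ha : A i = a' + a'') :
    Bcoef A = Bcoef (A.updateRow i a') + Bcoef (A.updateRow i a'') := by
  have hA : A = A.updateRow i (a' + a'') := by rw [← ha, Matrix.updateRow_eq_self]
  unfold Bcoef
  rw [← Finset.sum_add_distrib]
  refine Finset.sum_congr rfl fun col _ => ?_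
  rw [← Finset.sum_add_distrib]
  refine Finset.sum_congr rfl fun p _ => ?_
  rw [← Finset.sum_add_distrib]
  refine Finset.sum_congr rfl fun q _ => ?_
  by_cases hpq : p < q
  · simp only [if_pos hpq]
    by_cases hip : i = p
    · subst hip
      have hm : ∀ w : Fin (m + 1) → ℤ,
          (A.updateRow i w).submatrix (skip2 i q) col.succAbove =
            A.submatrix (skip2 i q) col.succAbove :=
        fun w => sub_noup A i w _ _ (fun s => skip2_ne_left hpq s)
      rw [hm, hm]
      have hq : q ≠ i := ne_of_gt hpq
      have h0 : A i col = a' col + a'' col := by rw [ha]; rfl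
      simp only [Matrix.updateRow_apply, if_pos rfl, if_neg hq, h0, if_true]
      ring
    · by_cases hiq : i = q
      · subst hiq
        have hm : ∀ w : Fin (m + 1) → ℤ,
            (A.updateRow i w).submatrix (skip2 p i) col.succAbove =
              A.submatrix (skip2 p i) col.succAbove :=
          fun w => sub_noup A i w _ _ (fun s => skip2_ne_right hpq s)
        rw [hm, hm]
        have hp : p ≠ i := ne_of_lt hpq
        have h0 : A i col = a' col + a'' col := by rw [ha]; rfl
        simp only [Matrix.updateRow_apply, if_pos rfl, if_neg hp, h0, if_true]
        ring
      · obtain ⟨r, hr⟩ := skip2_exists hpq hip hiq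
        have huniq : ∀ s, skip2 p q s = i → s = r := fun s hs => skip2_inj (hs.trans hr.symm)
        have hdet : (A.submatrix (skip2 p q) col.succAbove).det =
            ((A.updateRow i a').submatrix (skip2 p q) col.succAbove).det +
              ((A.updateRow i a'').submatrix (skip2 p q) col.succAbove).det := by
          conv_lhs => rw [hA]
          exact det_sub_add A i a' a'' (skip2 p q) col.succAbove r hr huniq
        have hpne : p ≠ i := fun h => hip h.symm
        have hqne : q ≠ i := fun h => hiq h.symm
        simp only [Matrix.updateRow_apply, if_neg hpne, if_neg hqne, hdet]
        ring
  · simp [if_neg hpq]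

lemma minor_add {m : ℕ} (A : Matrix (Fin (m + 2)) (Fin (m + 1)) ℤ) (i : Fin (m + 2))
    (a' a'' : Fin (m + 1) → ℤ) (ha : A i = a' + a'') {j : Fin (m + 2)} (hj : j ≠ i) :
    (A.submatrix j.succAbove id).det =
      ((A.updateRow i a').submatrix j.succAbove id).det +
        ((A.updateRow i a'').submatrix j.succAbove id).det := by
  have hA : A = A.updateRow i (a' + a'') := by rw [← ha, Matrix.updateRow_eq_self]
  obtain ⟨r, hr⟩ := Fin.exists_succAbove_eq (Ne.symm hj)
  have huniq : ∀ s, j.succAbove s = i → s = r :=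
    fun s hs => Fin.succAbove_right_injective (hs.trans hr.symm)
  conv_lhs => rw [hA]
  exact det_sub_add A i a' a'' j.succAbove id r hr huniq

lemma minor_eq {m : ℕ} (A : Matrix (Fin (m + 2)) (Fin (m + 1)) ℤ) (i : Fin (m + 2))
    (w : Fin (m + 1) → ℤ) :
    ((A.updateRow i w).submatrix i.succAbove id) = A.submatrix i.succAbove id :=
  sub_noup A i w _ _ (fun s => Fin.succAbove_ne i s)

/-- Multiplicativity of the symbol of monomials in the `i`-th entry: if the `i`-th
monomial factors as `fᵢ = fᵢ' · fᵢ''`, i.e. `cᵢ = cᵢ' · cᵢ''` in `kˣ` and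
`aᵢ = aᵢ' + aᵢ''` in `ℤⁿ`, then
`[f₀,…,fᵢ'fᵢ'',…,fₙ] = [f₀,…,fᵢ',…,fₙ] · [f₀,…,fᵢ'',…,fₙ]`. -/
theorem monomialSymbol_multiplicative {k : Type*} [Field k] {m : ℕ}
    (c : Fin (m + 2) → kˣ) (A : Matrix (Fin (m + 2)) (Fin (m + 1)) ℤ)
    (i : Fin (m + 2)) (c' c'' : kˣ) (a' a'' : Fin (m + 1) → ℤ)
    (hc : c i = c' * c'') (ha : A i = a' + a'') :
    monomialSymbol c A =
      monomialSymbol (Function.update c i c') (A.updateRow i a') *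
        monomialSymbol (Function.update c i c'') (A.updateRow i a'') := by
  unfold monomialSymbol
  rw [Bcoef_add A i a' a'' ha, _root_.zpow_add, mul_mul_mul_comm]
  congr 1
  rw [← Finset.prod_mul_distrib]
  refine Finset.prod_congr rfl fun j _ => ?_
  by_cases hj : j = i
  · subst hj
    rw [Function.update_self, Function.update_self, minor_eq, minor_eq, hc, mul_zpow]
  · rw [Function.update_of_ne hj, Function.update_of_ne hj, minor_add A i a' a'' ha hj,
      mul_add, _root_.zpow_add]
end

section
/- Let f_i = c_i t^{a_i}, 0 ≤ i ≤ n, be n+1 monomials in n variables over the field k, and let 0 ≤ i < j ≤ n. Then the symbol is multiplicatively skew-symmetric: the symbol of the collection obtained by interchanging the monomials in positions i and j (i.e. swapping both the coefficients c_i, c_j and the exponent rows a_i, a_j) is the multiplicative inverse of the original symbol: [f_0,…,f_j,…,f_i,…,f_n] = [f_0,…,f_i,…,f_j,…,f_n]^{−1}. -/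
open Matrix

lemma skip2_injective {m : ℕ} {i j : Fin (m+2)} (h : i < j) :
    Function.Injective (skip2 i j) := by
  intro a b hab
  have hij : (i:ℕ) < (j:ℕ) := h
  simp only [skip2] at hab
  have ha := a.isLt; have hb := b.isLt
  apply Fin.ext
  split_ifs at hab <;> simp [Fin.ext_iff] at hab <;> omega

lemma mem_range_skip2 {m : ℕ} {i j : Fin (m+2)} (h : i < j) (x : Fin (m+2)) :
    (∃ r, skip2 i j r = x) ↔ x ≠ i ∧ x ≠ j := by
  have hij : (i:ℕ) < (j:ℕ) := h
  have hjl := j.isLt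
  constructor
  · rintro ⟨r, rfl⟩
    have hr := r.isLt
    simp only [skip2]
    split_ifs <;> simp [Fin.ext_iff] <;> omega
  · rintro ⟨h1, h2⟩
    have h1' : (x:ℕ) ≠ (i:ℕ) := fun hh => h1 (Fin.ext hh)
    have h2' : (x:ℕ) ≠ (j:ℕ) := fun hh => h2 (Fin.ext hh)
    have hx := x.isLt
    refine ⟨⟨if (x:ℕ) < (i:ℕ) then (x:ℕ) else if (x:ℕ) < (j:ℕ) then (x:ℕ) - 1 else (x:ℕ) - 2, by split_ifs <;> omega⟩, ?_⟩
    simp only [skip2]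
    split_ifs <;> simp_all [Fin.ext_iff] <;> omega

lemma exists_perm_comp {a : ℕ} {β : Type*} {f g : Fin a → β}
    (hf : Function.Injective f) (hg : Function.Injective g)
    (h : Set.range f = Set.range g) : ∃ τ : Equiv.Perm (Fin a), f ∘ τ = g := by
  refine ⟨(Equiv.ofInjective g hg).trans ((Equiv.setCongr h.symm).trans (Equiv.ofInjective f hf).symm), ?_⟩
  funext q
  have : f ((Equiv.ofInjective f hf).symm ⟨g q, h ▸ Set.mem_range_self q⟩) = g q :=
    Equiv.apply_ofInjective_symm hf _
  exact this

lemma det_comp_perm {n : ℕ} {I J : Type*} (M : Matrix I J ℤ) (f : Fin n → I) (e : Fin n → J)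
    (τ : Equiv.Perm (Fin n)) :
    (M.submatrix (f ∘ ⇑τ) e).det = ((Equiv.Perm.sign τ : ℤˣ) : ℤ) * (M.submatrix f e).det := by
  have h : M.submatrix (f ∘ ⇑τ) e = (M.submatrix f e).submatrix (⇑τ) id := rfl
  rw [h, Matrix.det_permute]; norm_cast

lemma det_congr_mod2 {n : ℕ} {I J : Type*} (M : Matrix I J ℤ) {f g : Fin n → I} (e : Fin n → J)
    (hf : Function.Injective f) (hg : Function.Injective g) (h : Set.range f = Set.range g) :
    (((M.submatrix g e).det : ℤ) : ZMod 2) = ((M.submatrix f e).det : ZMod 2) := by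
  obtain ⟨τ, hτ⟩ := exists_perm_comp hf hg h
  rw [← hτ, det_comp_perm]
  rcases Int.units_eq_one_or (Equiv.Perm.sign τ) with hs | hs <;> rw [hs] <;> push_cast
  · ring
  · rw [show (-1 : ZMod 2) = 1 by decide]; ring

lemma sum_pairs {n : ℕ} {M : Type*} [AddCommMonoid M] (f : Fin n → Fin n → M) :
    ∑ i, ∑ j, (if i < j then f i j else 0) =
      ∑ p ∈ Finset.filter (fun p : Fin n × Fin n => p.1 < p.2) Finset.univ, f p.1 p.2 := by
  rw [Finset.sum_filter, ← Finset.univ_product_univ, Finset.sum_product]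

lemma Bcoef_perm {m : ℕ} (τ : Equiv.Perm (Fin (m+2))) (A : Matrix (Fin (m+2)) (Fin (m+1)) ℤ) :
    ((Bcoef (A.submatrix ⇑τ id) : ℤ) : ZMod 2) = ((Bcoef A : ℤ) : ZMod 2) := by
  unfold Bcoef
  push_cast [-Int.cast_det]
  refine Finset.sum_congr rfl fun c _ => ?_
  have h1 : ∀ (B : Matrix (Fin (m+2)) (Fin (m+1)) ℤ),
      (∑ i, ∑ j, if i < j then ((B i c : ZMod 2) * (B j c : ZMod 2) *
        ((B.submatrix (skip2 i j) c.succAbove).det : ZMod 2)) else 0) =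
      ∑ p ∈ Finset.filter (fun p : Fin (m+2) × Fin (m+2) => p.1 < p.2) Finset.univ,
        ((B p.1 c : ZMod 2) * (B p.2 c : ZMod 2) *
          ((B.submatrix (skip2 p.1 p.2) c.succAbove).det : ZMod 2)) :=
    fun B => sum_pairs _
  rw [h1, h1]
  refine Finset.sum_nbij' (fun p => (min (τ p.1) (τ p.2), max (τ p.1) (τ p.2)))
    (fun p => (min (τ⁻¹ p.1) (τ⁻¹ p.2), max (τ⁻¹ p.1) (τ⁻¹ p.2))) ?_ ?_ ?_ ?_ ?_
  · intro p hp
    simp only [Finset.mem_filter, Finset.mem_univ, true_and] at hp ⊢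
    exact min_lt_max.mpr (fun h => hp.ne (τ.injective h))
  · intro p hp
    simp only [Finset.mem_filter, Finset.mem_univ, true_and] at hp ⊢
    exact min_lt_max.mpr (fun h => hp.ne (τ⁻¹.injective h))
  · intro p hp
    simp only [Finset.mem_filter, Finset.mem_univ, true_and] at hp
    rcases lt_or_gt_of_ne (fun h : τ p.1 = τ p.2 => hp.ne (τ.injective h)) with h | h
    all_goals dsimp only
    · rw [min_eq_left h.le, max_eq_right h.le]
      simp only [Equiv.Perm.inv_def, Equiv.symm_apply_apply]
      exact Prod.ext (min_eq_left hp.le) (max_eq_right hp.le)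
    · rw [min_eq_right h.le, max_eq_left h.le]
      simp only [Equiv.Perm.inv_def, Equiv.symm_apply_apply]
      exact Prod.ext (min_eq_right hp.le) (max_eq_left hp.le)
  · intro p hp
    simp only [Finset.mem_filter, Finset.mem_univ, true_and] at hp
    rcases lt_or_gt_of_ne (fun h : τ⁻¹ p.1 = τ⁻¹ p.2 => hp.ne (τ⁻¹.injective h)) with h | h
    all_goals dsimp only
    · rw [min_eq_left h.le, max_eq_right h.le]
      simp only [Equiv.Perm.inv_def, Equiv.apply_symm_apply]
      exact Prod.ext (min_eq_left hp.le) (max_eq_right hp.le)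
    · rw [min_eq_right h.le, max_eq_left h.le]
      simp only [Equiv.Perm.inv_def, Equiv.apply_symm_apply]
      exact Prod.ext (min_eq_right hp.le) (max_eq_left hp.le)
  · intro p hp
    simp only [Finset.mem_filter, Finset.mem_univ, true_and] at hp
    have hne : τ p.1 ≠ τ p.2 := fun h => hp.ne (τ.injective h)
    have hmm : min (τ p.1) (τ p.2) < max (τ p.1) (τ p.2) := min_lt_max.mpr hne
    -- determinant part
    have hdet : (((A.submatrix ⇑τ id).submatrix (skip2 p.1 p.2) c.succAbove).det : ZMod 2) =
        ((A.submatrix (skip2 (min (τ p.1) (τ p.2)) (max (τ p.1) (τ p.2))) c.succAbove).det : ZMod 2) := by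
      rw [Matrix.submatrix_submatrix]
      have hrange : Set.range (⇑τ ∘ skip2 p.1 p.2) =
          Set.range (skip2 (min (τ p.1) (τ p.2)) (max (τ p.1) (τ p.2))) := by
        ext x
        simp only [Set.mem_range, Function.comp_apply]
        constructor
        · rintro ⟨r, rfl⟩
          rw [mem_range_skip2 hmm]
          have h2 : skip2 p.1 p.2 r ≠ p.1 ∧ skip2 p.1 p.2 r ≠ p.2 :=
            (mem_range_skip2 hp _).mp ⟨r, rfl⟩
          have g1 : τ (skip2 p.1 p.2 r) ≠ τ p.1 := fun e => h2.1 (τ.injective e)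
          have g2 : τ (skip2 p.1 p.2 r) ≠ τ p.2 := fun e => h2.2 (τ.injective e)
          rcases le_total (τ p.1) (τ p.2) with hh | hh
          · exact ⟨by rwa [min_eq_left hh], by rwa [max_eq_right hh]⟩
          · exact ⟨by rwa [min_eq_right hh], by rwa [max_eq_left hh]⟩
        · intro hx
          have hx' := (mem_range_skip2 hmm x).mp hx
          have hx1 : x ≠ τ p.1 := by
            rcases le_total (τ p.1) (τ p.2) with hh | hh
            · simpa [min_eq_left hh] using hx'.1
            · simpa [max_eq_left hh] using hx'.2
          have hx2 : x ≠ τ p.2 := by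
            rcases le_total (τ p.1) (τ p.2) with hh | hh
            · simpa [max_eq_right hh] using hx'.2
            · simpa [min_eq_right hh] using hx'.1
          have : τ⁻¹ x ≠ p.1 ∧ τ⁻¹ x ≠ p.2 := by
            constructor <;> intro e
            · exact hx1 (by rw [← e]; simp)
            · exact hx2 (by rw [← e]; simp)
          obtain ⟨r, hr⟩ := (mem_range_skip2 hp (τ⁻¹ x)).mpr this
          exact ⟨r, by rw [hr]; simp⟩
      have hinj1 : Function.Injective (⇑τ ∘ skip2 p.1 p.2) :=
        τ.injective.comp (skip2_injective hp)
      have hinj2 : Function.Injective (skip2 (min (τ p.1) (τ p.2)) (max (τ p.1) (τ p.2))) :=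
        skip2_injective hmm
      have := det_congr_mod2 A c.succAbove hinj1 hinj2 hrange
      simpa using this.symm
    -- entries part
    simp only [Matrix.submatrix_apply, id]
    rw [hdet]
    rcases le_total (τ p.1) (τ p.2) with hh | hh
    · rw [min_eq_left hh, max_eq_right hh]
    · rw [min_eq_right hh, max_eq_left hh]; ring

-- adjacent swap composes with succAbove
lemma swap_comp_succAbove_adj {m : ℕ} {i j : Fin (m+2)} (hij : (j:ℕ) = (i:ℕ) + 1) :
    ⇑(Equiv.swap i j) ∘ j.succAbove = i.succAbove := by
  funext q
  simp only [Function.comp_apply, Equiv.swap_apply_def, Fin.succAbove, Fin.ext_iff,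
    Fin.lt_def, Fin.coe_castSucc, Fin.val_succ]
  split_ifs <;> simp_all [Fin.lt_def, Fin.ext_iff] <;> omega

lemma swap_comp_succAbove_adj' {m : ℕ} {i j : Fin (m+2)} (hij : (j:ℕ) = (i:ℕ) + 1) :
    ⇑(Equiv.swap i j) ∘ i.succAbove = j.succAbove := by
  funext q
  simp only [Function.comp_apply, Equiv.swap_apply_def, Fin.succAbove, Fin.ext_iff,
    Fin.lt_def, Fin.coe_castSucc, Fin.val_succ]
  split_ifs <;> simp_all [Fin.lt_def, Fin.ext_iff] <;> omega

-- swap composed with succAbove r, r not i or j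
lemma swap_comp_succAbove_ne {m : ℕ} {i j r : Fin (m+2)} (hij : i ≠ j) (hi : r ≠ i) (hj : r ≠ j)
    (A : Matrix (Fin (m+2)) (Fin (m+1)) ℤ) :
    (A.submatrix (⇑(Equiv.swap i j) ∘ r.succAbove) id).det =
      - (A.submatrix r.succAbove id).det := by
  obtain ⟨i', hi'⟩ := Fin.exists_succAbove_eq hi.symm
  obtain ⟨j', hj'⟩ := Fin.exists_succAbove_eq hj.symm
  have hij' : i' ≠ j' := fun e => hij (by rw [← hi', ← hj', e])
  have hcomp : ⇑(Equiv.swap i j) ∘ r.succAbove = r.succAbove ∘ ⇑(Equiv.swap i' j') := by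
    funext q
    rcases eq_or_ne q i' with rfl | hq1
    · simp [hi', hj', Equiv.swap_apply_left]
    rcases eq_or_ne q j' with rfl | hq2
    · simp [hi', hj', Equiv.swap_apply_right]
    · have h1 : r.succAbove q ≠ i := fun e => hq1 (r.succAbove_right_injective (by rw [e, hi']))
      have h2 : r.succAbove q ≠ j := fun e => hq2 (r.succAbove_right_injective (by rw [e, hj']))
      simp [Equiv.swap_apply_of_ne_of_ne h1 h2, Equiv.swap_apply_of_ne_of_ne hq1 hq2]
  rw [hcomp]
  have h : A.submatrix (r.succAbove ∘ ⇑(Equiv.swap i' j')) id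
      = (A.submatrix r.succAbove id).submatrix (⇑(Equiv.swap i' j')) id := rfl
  rw [h, Matrix.det_permute, Equiv.Perm.sign_swap hij']
  push_cast
  ring

lemma neg_one_zpow_congr {k : Type*} [Field k] {a b : ℤ} (h : ((a : ZMod 2) = (b : ZMod 2))) :
    (-1 : kˣ) ^ a = (-1 : kˣ) ^ b := by
  have hd : (2:ℤ) ∣ b - a := Int.ModEq.dvd ((ZMod.intCast_eq_intCast_iff a b 2).mp h)
  obtain ⟨t, ht⟩ := hd
  have hb : b = a + 2 * t := by omega
  rw [hb, _root_.zpow_add, _root_.zpow_mul]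
  have h2 : ((-1 : kˣ) ^ (2:ℤ)) = 1 := by
    rw [show (2:ℤ) = (2:ℕ) from rfl, zpow_natCast]
    simp
  rw [h2, _root_.one_zpow, mul_one]

lemma monomialSymbol_swap_adj {k : Type*} [Field k] {m : ℕ}
    (c : Fin (m + 2) → kˣ) (A : Matrix (Fin (m + 2)) (Fin (m + 1)) ℤ)
    (i j : Fin (m + 2)) (hij : (j:ℕ) = (i:ℕ) + 1) :
    monomialSymbol (c ∘ Equiv.swap i j) (A.submatrix (Equiv.swap i j) id) =
      (monomialSymbol c A)⁻¹ := by
  have hne : i ≠ j := by simp [Fin.ext_iff]; omega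
  have hsign : ((-1 : kˣ) ^ Bcoef (A.submatrix ⇑(Equiv.swap i j) id))
      = ((-1:kˣ) ^ Bcoef A)⁻¹ := by
    rw [← _root_.zpow_neg]
    apply neg_one_zpow_congr
    rw [Bcoef_perm (Equiv.swap i j) A]
    push_cast
    exact (CharTwo.neg_eq _).symm
  have hprod : (∏ r : Fin (m+2), (c ∘ ⇑(Equiv.swap i j)) r ^
        ((-1:ℤ)^(r:ℕ) * ((A.submatrix (⇑(Equiv.swap i j)) id).submatrix r.succAbove id).det))
      = (∏ r : Fin (m+2), c r ^ ((-1:ℤ)^(r:ℕ) * (A.submatrix r.succAbove id).det))⁻¹ := by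
    rw [← Finset.prod_inv_distrib]
    rw [← Equiv.prod_comp (Equiv.swap i j) (fun r => (c ∘ ⇑(Equiv.swap i j)) r ^
        ((-1:ℤ)^(r:ℕ) * ((A.submatrix (⇑(Equiv.swap i j)) id).submatrix r.succAbove id).det))]
    refine Finset.prod_congr rfl fun r _ => ?_
    simp only [Function.comp_apply, Equiv.swap_apply_self, Matrix.submatrix_submatrix,
      Function.comp_id]
    rcases eq_or_ne r i with rfl | hri
    · rw [Equiv.swap_apply_left, swap_comp_succAbove_adj hij, ← _root_.zpow_neg]
      congr 1
      rw [hij, pow_succ]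
      ring
    rcases eq_or_ne r j with rfl | hrj
    · rw [Equiv.swap_apply_right, swap_comp_succAbove_adj' hij, ← _root_.zpow_neg]
      congr 1
      rw [hij, pow_succ]
      ring
    · rw [Equiv.swap_apply_of_ne_of_ne hri hrj, swap_comp_succAbove_ne hne hri hrj, ← _root_.zpow_neg]
      congr 1
      ring
  rw [monomialSymbol, monomialSymbol, mul_inv, hsign, hprod]

lemma monomialSymbol_swap_gen {k : Type*} [Field k] {m : ℕ} :
    ∀ (d : ℕ) (i j : Fin (m + 2)), (j:ℕ) = (i:ℕ) + d + 1 →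
    ∀ (c : Fin (m + 2) → kˣ) (A : Matrix (Fin (m + 2)) (Fin (m + 1)) ℤ),
    monomialSymbol (c ∘ Equiv.swap i j) (A.submatrix (Equiv.swap i j) id) =
      (monomialSymbol c A)⁻¹ := by
  intro d
  induction d with
  | zero => intro i j h c A; exact monomialSymbol_swap_adj c A i j (by omega)
  | succ d ih =>
    intro i j h c A
    have hjlt := j.isLt
    set i1 : Fin (m + 2) := ⟨(i:ℕ) + 1, by omega⟩ with hi1
    have hii1 : i ≠ i1 := by simp [Fin.ext_iff, hi1]
    have hij : i ≠ j := by simp [Fin.ext_iff]; omega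
    have hi1j : (j:ℕ) = (i1:ℕ) + d + 1 := by simp [hi1]; omega
    have hdec : Equiv.swap i j =
        Equiv.swap i1 j * Equiv.swap i i1 * Equiv.swap i1 j := by
      have h1 : (Equiv.swap i1 j) i = i :=
        Equiv.swap_apply_of_ne_of_ne hii1 hij
      have h2 : (Equiv.swap i1 j) i1 = j := Equiv.swap_apply_left i1 j
      calc Equiv.swap i j = Equiv.swap ((Equiv.swap i1 j) i) ((Equiv.swap i1 j) i1) := by
            rw [h1, h2]
        _ = Equiv.swap i1 j * Equiv.swap i i1 * (Equiv.swap i1 j)⁻¹ :=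
            Equiv.swap_apply_apply (Equiv.swap i1 j) i i1
        _ = Equiv.swap i1 j * Equiv.swap i i1 * Equiv.swap i1 j := by
            rw [Equiv.swap_inv]
    rw [hdec]
    have hcc : c ∘ ⇑(Equiv.swap i1 j * Equiv.swap i i1 * Equiv.swap i1 j) =
        ((c ∘ ⇑(Equiv.swap i1 j)) ∘ ⇑(Equiv.swap i i1)) ∘ ⇑(Equiv.swap i1 j) := rfl
    have hsub : A.submatrix (⇑(Equiv.swap i1 j * Equiv.swap i i1 * Equiv.swap i1 j)) id =
        (((A.submatrix (⇑(Equiv.swap i1 j)) id).submatrix (⇑(Equiv.swap i i1)) id).submatrix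
          (⇑(Equiv.swap i1 j)) id) := by
      ext r q
      simp [Matrix.submatrix_apply]
    rw [hcc, hsub]
    rw [ih i1 j hi1j ((c ∘ ⇑(Equiv.swap i1 j)) ∘ ⇑(Equiv.swap i i1))
      ((A.submatrix (⇑(Equiv.swap i1 j)) id).submatrix (⇑(Equiv.swap i i1)) id)]
    rw [monomialSymbol_swap_adj (c ∘ ⇑(Equiv.swap i1 j)) (A.submatrix (⇑(Equiv.swap i1 j)) id)
      i i1 (by simp [hi1])]
    rw [ih i1 j hi1j c A]
    rw [inv_inv]

/-- Multiplicative skew-symmetry of the symbol of monomials: interchanging the monomials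
in positions `i < j` (swapping both the coefficients and the exponent rows) inverts the
symbol: `[f₀,…,fⱼ,…,fᵢ,…,fₙ] = [f₀,…,fᵢ,…,fⱼ,…,fₙ]⁻¹`. -/
theorem monomialSymbol_swap {k : Type*} [Field k] {m : ℕ}
    (c : Fin (m + 2) → kˣ) (A : Matrix (Fin (m + 2)) (Fin (m + 1)) ℤ)
    (i j : Fin (m + 2)) (hij : i < j) :
    monomialSymbol (c ∘ Equiv.swap i j) (A.submatrix (Equiv.swap i j) id) =
      (monomialSymbol c A)⁻¹ := by
  have h : (j:ℕ) = (i:ℕ) + ((j:ℕ) - (i:ℕ) - 1) + 1 := by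
    have : (i:ℕ) < (j:ℕ) := hij
    omega
  exact monomialSymbol_swap_gen ((j:ℕ) - (i:ℕ) - 1) i j h c A
end

section
/- Let f_i = c_i t^{a_i}, 0 ≤ i ≤ n, be n+1 monomials in n variables over the field k, and let λ_1,…,λ_n ∈ k^× define the translation s = λt of the torus, i.e. s_j = λ_j t_j. Then the symbol is invariant under translations: setting f_i' = c_i λ^{a_i} t^{a_i}, where λ^{a_i} = ∏_{j=1}^n λ_j^{a_{ij}}, one has [f_0',…,f_n'] = [f_0,…,f_n]. -/
open Matrix

private lemma myzpow_sum {G : Type*} [CommGroup G] (a : G) {ι : Type*} (s : Finset ι) (f : ι → ℤ) :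
    a ^ (∑ i ∈ s, f i) = ∏ i ∈ s, a ^ f i := by
  induction s using Finset.cons_induction with
  | empty => simp
  | cons i s hi ih => rw [Finset.sum_cons, Finset.prod_cons, _root_.zpow_add, ih]

private lemma sumAlt {m : ℕ} (A : Matrix (Fin (m + 2)) (Fin (m + 1)) ℤ) (j : Fin (m + 1)) :
    ∑ i : Fin (m + 2), (-1 : ℤ) ^ (i : ℕ) * A i j * (A.submatrix i.succAbove id).det = 0 := by
  set M : Matrix (Fin (m + 2)) (Fin (m + 2)) ℤ :=
    Matrix.of fun i => Fin.cons (A i j) (A i) with hM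
  have h0 : M.det = 0 := by
    apply det_zero_of_column_eq (i := 0) (j := j.succ) (by simp [Fin.succ_ne_zero j, Ne.symm])
    intro i; simp [hM]
  have h1 := det_succ_column_zero M
  have h2 : ∀ i : Fin (m + 2), (M.submatrix i.succAbove Fin.succ) = A.submatrix i.succAbove id := by
    intro i; ext a b; simp [hM]
  rw [h0] at h1
  have h3 : ∀ i : Fin (m + 2), M i 0 = A i j := fun i => rfl
  calc ∑ i : Fin (m + 2), (-1 : ℤ) ^ (i : ℕ) * A i j * (A.submatrix i.succAbove id).det
      = ∑ i : Fin (m + 2), (-1 : ℤ) ^ (i : ℕ) * M i 0 * (M.submatrix i.succAbove Fin.succ).det := by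
        apply Finset.sum_congr rfl; intro i _; rw [h3, h2]
    _ = 0 := h1.symm

/-- Invariance of the symbol of monomials under translations `s = λ t` of the torus:
with `fᵢ' = cᵢ λ^{aᵢ} t^{aᵢ}`, where `λ^{aᵢ} = ∏ⱼ λⱼ^{aᵢⱼ}`, one has
`[f₀',…,fₙ'] = [f₀,…,fₙ]`. -/
theorem monomialSymbol_translation {k : Type*} [Field k] {m : ℕ}
    (c : Fin (m + 2) → kˣ) (A : Matrix (Fin (m + 2)) (Fin (m + 1)) ℤ)
    (lam : Fin (m + 1) → kˣ) :
    monomialSymbol (fun i => c i * ∏ j, lam j ^ A i j) A = monomialSymbol c A := by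
  unfold monomialSymbol
  congr 1
  simp only [mul_zpow, Finset.prod_mul_distrib]
  rw [mul_eq_left]
  calc (∏ i : Fin (m + 2), (∏ j, lam j ^ A i j) ^
        ((-1 : ℤ) ^ (i : ℕ) * (A.submatrix i.succAbove id).det))
      = ∏ j, ∏ i : Fin (m + 2),
        lam j ^ (A i j * ((-1 : ℤ) ^ (i : ℕ) * (A.submatrix i.succAbove id).det)) := by
        rw [Finset.prod_comm]
        refine Finset.prod_congr rfl fun i _ => ?_
        rw [← Finset.prod_zpow]
        exact Finset.prod_congr rfl fun j _ => by rw [← _root_.zpow_mul]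
    _ = ∏ j, lam j ^ (∑ i : Fin (m + 2),
        A i j * ((-1 : ℤ) ^ (i : ℕ) * (A.submatrix i.succAbove id).det)) :=
        Finset.prod_congr rfl fun j _ => (myzpow_sum _ _ _).symm
    _ = 1 := by
        refine Finset.prod_eq_one fun j _ => ?_
        have h : ∑ i : Fin (m + 2),
            A i j * ((-1 : ℤ) ^ (i : ℕ) * (A.submatrix i.succAbove id).det) = 0 := by
          rw [← sumAlt A j]; exact Finset.sum_congr rfl fun i _ => by ring
        rw [h, zpow_zero]
end

section
/- Let A be an (n+1)×n integer matrix with rows a_0,…,a_n ∈ ℤ^n, and let Ā denote its reduction modulo 2, a matrix over the field 𝔽_2 = ℤ/2ℤ. If the rank of Ā over 𝔽_2 is strictly less than n, then B(A) ≡ 0 (mod 2). -/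
open Matrix

lemma succAbove_val' {n : ℕ} (p : Fin (n+1)) (i : Fin n) :
    (p.succAbove i).val = if i.val < p.val then i.val else i.val + 1 := by
  rw [Fin.succAbove]
  split_ifs with h1 h2 h2 <;> simp_all [Fin.lt_def] <;> omega

lemma skip2_val {m : ℕ} (i j : Fin (m + 2)) (r : Fin m) :
    (skip2 i j r).val = if r.val < i.val then r.val
      else if r.val + 1 < j.val then r.val + 1 else r.val + 2 := by
  unfold skip2; split_ifs <;> rfl

lemma succAbove_succAbove {m : ℕ} (i : Fin (m+2)) (i' : Fin (m+1)) (r : Fin m) :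
    i.succAbove (i'.succAbove r) =
      if (i.succAbove i').val < i.val then skip2 (i.succAbove i') i r
      else skip2 i (i.succAbove i') r := by
  have hne : i.succAbove i' ≠ i := Fin.succAbove_ne _ _
  have hne' : (i.succAbove i').val ≠ i.val := fun h => hne (Fin.ext h)
  apply Fin.ext
  have h1 := succAbove_val' i (i'.succAbove r)
  have h2 := succAbove_val' i' r
  have h3 := succAbove_val' i i'
  rw [h2] at h1
  rw [h3] at hne'
  split_ifs with h
  all_goals
    rw [h1, skip2_val, h3]
    rw [h3] at h
    clear h1 h2 h3 hne
    split_ifs at * <;> omega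

lemma sum_pairs_s7 {R : Type*} [AddCommGroup R] {N : ℕ} (T : Fin N → Fin N → R) :
    ∑ i, ∑ j, T i j =
      (∑ i, ∑ j, if i < j then T i j + T j i else 0) + ∑ i, T i i := by
  have key : ∀ i j : Fin N, T i j = (if i < j then T i j else 0) +
      ((if j < i then T i j else 0) + (if i = j then T i j else 0)) := by
    intro i j
    rcases lt_trichotomy i j with h | h | h
    · simp [h, asymm h, ne_of_lt h]
    · simp [h, lt_irrefl]
    · simp [h, asymm h, (ne_of_lt h).symm]
  calc ∑ i, ∑ j, T i j
      = (∑ i, ∑ j, if i < j then T i j else 0) +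
        ((∑ i, ∑ j, if j < i then T i j else 0) +
         (∑ i, ∑ j, if i = j then T i j else 0)) := by
        rw [← Finset.sum_add_distrib, ← Finset.sum_add_distrib]
        refine Finset.sum_congr rfl fun i _ => ?_
        rw [← Finset.sum_add_distrib, ← Finset.sum_add_distrib]
        exact Finset.sum_congr rfl fun j _ => key i j
    _ = (∑ i, ∑ j, if i < j then T i j + T j i else 0) + ∑ i, T i i := by
        have h1 : (∑ i, ∑ j, if j < i then T i j else 0)
            = ∑ i, ∑ j, if i < j then T j i else 0 := by
          rw [Finset.sum_comm]
        have h2 : (∑ i : Fin N, ∑ j, if i = j then T i j else 0) = ∑ i, T i i := by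
          refine Finset.sum_congr rfl fun i _ => ?_
          simp
        rw [h1, h2, ← add_assoc]
        congr 1
        rw [← Finset.sum_add_distrib]
        refine Finset.sum_congr rfl fun i _ => ?_
        rw [← Finset.sum_add_distrib]
        refine Finset.sum_congr rfl fun j _ => ?_
        split_ifs <;> simp

/-- The square matrix `[N | u | v]`. -/
def colsAux {m : ℕ} (N : Matrix (Fin (m+2)) (Fin m) (ZMod 2)) (u v : Fin (m+2) → ZMod 2) :
    Matrix (Fin (m+2)) (Fin (m+2)) (ZMod 2) := fun i j =>
  if h : (j : ℕ) < m then N i ⟨j, h⟩ else if (j : ℕ) = m then u i else v i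

lemma neg_one_zmod2 : (-1 : ZMod 2) = 1 := rfl

/-- Two-row Laplace expansion, char 2 version. -/
lemma det_colsAux {m : ℕ} (N : Matrix (Fin (m+2)) (Fin m) (ZMod 2)) (u v : Fin (m+2) → ZMod 2) :
    (colsAux N u v).det =
      ∑ i, ∑ j, if i < j then (v i * u j + v j * u i) * (N.submatrix (skip2 i j) id).det
        else 0 := by
  -- the symmetrized minor
  set G : Fin (m+2) → Fin (m+2) → ZMod 2 := fun a b =>
    (N.submatrix (fun r => if (a : ℕ) < (b : ℕ) then skip2 a b r else skip2 b a r) id).det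
    with hGdef
  have hGsymm : ∀ a b : Fin (m+2), G a b = G b a := by
    intro a b
    rcases lt_trichotomy (a : ℕ) (b : ℕ) with h | h | h
    · simp only [hGdef]
      congr 1
      ext r s
      simp [h, Nat.lt_asymm h]
    · have hab : a = b := Fin.ext h
      simp [hab]
    · simp only [hGdef]
      congr 1
      ext r s
      simp [h, Nat.lt_asymm h]
  have expand : (colsAux N u v).det =
      ∑ i, v i * ∑ i', u (i.succAbove i') * G i (i.succAbove i') := by
    rw [Matrix.det_succ_column (colsAux N u v) (Fin.last (m+1))]
    refine Finset.sum_congr rfl fun i _ => ?_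
    have hXi : colsAux N u v i (Fin.last (m+1)) = v i := by
      simp [colsAux, Fin.last]
    rw [hXi]
    simp only [neg_one_zmod2, one_pow, one_mul]
    congr 1
    rw [Matrix.det_succ_column _ (Fin.last m)]
    refine Finset.sum_congr rfl fun i' _ => ?_
    simp only [neg_one_zmod2, one_pow, one_mul, Matrix.submatrix_apply,
      Matrix.submatrix_submatrix]
    have hcol : ∀ s : Fin m,
        (((Fin.last (m+1)).succAbove ((Fin.last m).succAbove s)) : ℕ) = (s : ℕ) := by
      intro s
      simp [Fin.succAbove_last]
    congr 1
    · -- the entry is `u _`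
      have h1 : (((Fin.last (m+1)).succAbove (Fin.last m)) : ℕ) = m := by
        simp [Fin.succAbove_last]
      simp [colsAux, h1]
    · -- the minors agree
      show _ = G i (i.succAbove i')
      simp only [hGdef]
      have hne : (i.succAbove i') ≠ i := Fin.succAbove_ne _ _
      have hne' : ((i.succAbove i') : ℕ) ≠ (i : ℕ) := fun h => hne (Fin.ext h)
      congr 1
      ext r s
      simp only [Matrix.submatrix_apply, id_eq, Function.comp_apply]
      rw [succAbove_succAbove]
      by_cases hc : ((i.succAbove i') : ℕ) < (i : ℕ)
      · rw [if_pos hc, if_neg (by omega)]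
        have hs := (hcol s)
        have hlt : (((Fin.last (m+1)).succAbove ((Fin.last m).succAbove s)) : ℕ) < m := by
          rw [hs]; exact s.isLt
        simp only [colsAux, dif_pos hlt]
        congr 1
        exact Fin.ext (by rw [hs])
      · rw [if_neg hc, if_pos (by omega)]
        have hs := (hcol s)
        have hlt : (((Fin.last (m+1)).succAbove ((Fin.last m).succAbove s)) : ℕ) < m := by
          rw [hs]; exact s.isLt
        simp only [colsAux, dif_pos hlt]
        congr 1
        exact Fin.ext (by rw [hs])
  rw [expand]
  have step : ∀ i : Fin (m+2), v i * ∑ i', u (i.succAbove i') * G i (i.succAbove i')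
      = (∑ b, v i * (u b * G i b)) - v i * (u i * G i i) := by
    intro i
    have h0 := Fin.sum_univ_succAbove (fun b => u b * G i b) i
    have h' : ∑ i', u (i.succAbove i') * G i (i.succAbove i')
        = (∑ b, u b * G i b) - u i * G i i := by
      rw [h0]; ring
    rw [h', mul_sub, Finset.mul_sum]
  calc ∑ i, v i * ∑ i', u (i.succAbove i') * G i (i.succAbove i')
      = (∑ i, ∑ b, v i * (u b * G i b)) - ∑ i, v i * (u i * G i i) := by
        rw [← Finset.sum_sub_distrib]
        exact Finset.sum_congr rfl fun i _ => step i
    _ = ∑ i, ∑ b, if i < b then v i * (u b * G i b) + v b * (u i * G b i) else 0 := by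
        rw [sum_pairs_s7 (fun i b => v i * (u b * G i b))]
        ring
    _ = ∑ i, ∑ j, if i < j then (v i * u j + v j * u i) * (N.submatrix (skip2 i j) id).det
        else 0 := by
        refine Finset.sum_congr rfl fun i _ => Finset.sum_congr rfl fun b _ => ?_
        split_ifs with hib
        · have hib' : (i : ℕ) < (b : ℕ) := hib
          have hG : G i b = (N.submatrix (skip2 i b) id).det := by
            simp only [hGdef]
            congr 1
            ext r s
            simp [hib']
          rw [hGsymm b i, hG]
          ring
        · rfl

def B2 {m : ℕ} (M : Matrix (Fin (m + 2)) (Fin (m + 1)) (ZMod 2)) : ZMod 2 :=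
  ∑ c : Fin (m + 1), ∑ i : Fin (m + 2), ∑ j : Fin (m + 2),
    if i < j then M i c * M j c * (M.submatrix (skip2 i j) c.succAbove).det else 0

lemma Bcoef_cast {m : ℕ} (A : Matrix (Fin (m + 2)) (Fin (m + 1)) ℤ) :
    ((Bcoef A : ℤ) : ZMod 2) = B2 (A.map (fun x : ℤ => (x : ZMod 2))) := by
  simp only [Bcoef, B2, Int.cast_sum]
  refine Finset.sum_congr rfl fun c _ => ?_
  refine Finset.sum_congr rfl fun i _ => ?_
  refine Finset.sum_congr rfl fun j _ => ?_
  rw [apply_ite (Int.cast : ℤ → ZMod 2)]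
  split_ifs with h
  · rw [Int.cast_mul, Int.cast_mul,
      show ((Matrix.det (A.submatrix (skip2 i j) c.succAbove) : ℤ) : ZMod 2)
          = ((A.submatrix (skip2 i j) c.succAbove).map
              (Int.castRingHom (ZMod 2))).det from
        RingHom.map_det (Int.castRingHom (ZMod 2)) _,
      Matrix.submatrix_map]
    rfl
  · exact Int.cast_zero

lemma B2_zero_col {m : ℕ} (M : Matrix (Fin (m + 2)) (Fin (m + 1)) (ZMod 2))
    (k : Fin (m + 1)) (hk : ∀ i, M i k = 0) : B2 M = 0 := by
  refine Finset.sum_eq_zero fun c _ => Finset.sum_eq_zero fun i _ =>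
    Finset.sum_eq_zero fun j _ => ?_
  split_ifs with h
  · by_cases hck : c = k
    · subst hck; simp [hk]
    · obtain ⟨pos, hpos⟩ := Fin.exists_succAbove_eq (show k ≠ c from fun hh => hck hh.symm)
      have : (M.submatrix (skip2 i j) c.succAbove).det = 0 := by
        apply Matrix.det_eq_zero_of_column_eq_zero pos
        intro r
        simp [Matrix.submatrix_apply, hpos, hk]
      rw [this, mul_zero]
  · rfl

lemma det_submatrix_range_eq {m k : ℕ} (N : Matrix (Fin (m + 2)) (Fin (k+1)) (ZMod 2))
    (rows : Fin k → Fin (m + 2)) (g₁ g₂ : Fin k → Fin (k+1))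
    (h₁ : Function.Injective g₁) (h₂ : Function.Injective g₂)
    (hr : Set.range g₁ = Set.range g₂) :
    (N.submatrix rows g₁).det = (N.submatrix rows g₂).det := by
  obtain ⟨e, he⟩ : ∃ e : Fin k ≃ Fin k, ∀ x, g₁ (e x) = g₂ x := by
    refine ⟨(Equiv.ofInjective g₂ h₂).trans ((Equiv.setCongr hr.symm).trans
      (Equiv.ofInjective g₁ h₁).symm), fun x => ?_⟩
    simp [Equiv.trans_apply, Equiv.apply_ofInjective_symm]
  have hsub : N.submatrix rows g₂ = (N.submatrix rows g₁).submatrix id e := by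
    ext r s
    simp [he]
  rw [hsub, Matrix.det_permute' e (N.submatrix rows g₁)]
  rcases Int.units_eq_one_or (Equiv.Perm.sign e) with h | h <;> rw [h] <;>
    simp [CharTwo.neg_eq]

lemma B2_update {m : ℕ} (M : Matrix (Fin (m + 2)) (Fin (m + 1)) (ZMod 2)) (p q : Fin (m + 1))
    (hqp : q ≠ p) :
    B2 (M.updateCol p (fun i => M i p + M i q)) = B2 M := by
  set w : Fin (m + 2) → ZMod 2 := fun i => M i p + M i q with hw
  set M' := M.updateCol p w with hM'
  have minor_p : ∀ i j : Fin (m + 2),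
      M'.submatrix (skip2 i j) p.succAbove = M.submatrix (skip2 i j) p.succAbove := by
    intro i j; ext r s
    simp only [hM', Matrix.submatrix_apply, Matrix.updateCol_apply]
    rw [if_neg (Fin.succAbove_ne p s)]
  have minor_ne : ∀ c : Fin (m + 1), c ≠ p → ∀ i j : Fin (m + 2),
      (M'.submatrix (skip2 i j) c.succAbove).det
        = (M.submatrix (skip2 i j) c.succAbove).det
          + (if c = q then (M.submatrix (skip2 i j) p.succAbove).det else 0) := by
    intro c hcp i j
    obtain ⟨pos, hpos⟩ := Fin.exists_succAbove_eq (show p ≠ c from fun h => hcp h.symm)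
    have hsub : M'.submatrix (skip2 i j) c.succAbove
        = (M.submatrix (skip2 i j) c.succAbove).updateCol pos
            ((fun r => M (skip2 i j r) p) + (fun r => M (skip2 i j r) q)) := by
      ext r s
      simp only [hM', Matrix.submatrix_apply, Matrix.updateCol_apply, Pi.add_apply]
      by_cases hs : s = pos
      · subst hs
        rw [if_pos hpos, if_pos rfl, hw]
      · rw [if_neg hs, if_neg (fun h : c.succAbove s = p =>
          hs (Fin.succAbove_right_injective (p := c) (h.trans hpos.symm)))]
    rw [hsub, Matrix.det_updateCol_add]
    congr 1
    · have hcol : (fun r => M (skip2 i j r) p)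
          = fun r => (M.submatrix (skip2 i j) c.succAbove) r pos := by
        funext r; simp [Matrix.submatrix_apply, hpos]
      rw [hcol, Matrix.updateCol_eq_self]
    · by_cases hcq : c = q
      · subst hcq
        rw [if_pos rfl]
        have hτ : (M.submatrix (skip2 i j) c.succAbove).updateCol pos
              (fun r => M (skip2 i j r) c)
            = M.submatrix (skip2 i j) (fun s => if s = pos then c else c.succAbove s) := by
          ext r s
          simp only [Matrix.updateCol_apply, Matrix.submatrix_apply]
          by_cases hs : s = pos <;> simp [hs]
        rw [hτ]
        apply det_submatrix_range_eq
        · -- injectivity of τ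
          intro a b hab
          simp only at hab
          by_cases ha : a = pos <;> by_cases hb : b = pos
          · rw [ha, hb]
          · rw [if_pos ha, if_neg hb] at hab
            exact absurd hab.symm (Fin.succAbove_ne c b)
          · rw [if_neg ha, if_pos hb] at hab
            exact absurd hab (Fin.succAbove_ne c a)
          · rw [if_neg ha, if_neg hb] at hab
            exact Fin.succAbove_right_injective (p := c) hab
        · exact Fin.succAbove_right_injective (p := p)
        · -- range τ = range p.succAbove
          rw [Fin.range_succAbove]
          ext x
          simp only [Set.mem_range, Set.mem_compl_iff, Set.mem_singleton_iff]
          constructor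
          · rintro ⟨z, hz⟩
            by_cases hzp : z = pos
            · rw [if_pos hzp] at hz
              rw [← hz]
              exact fun h => hqp (h.symm ▸ rfl)
            · rw [if_neg hzp] at hz
              intro hx
              exact hzp (Fin.succAbove_right_injective (p := c)
                (hz.trans (hx.trans hpos.symm)))
          · intro hx
            by_cases hxc : x = c
            · exact ⟨pos, by rw [if_pos rfl, hxc]⟩
            · obtain ⟨z, hz⟩ := Fin.exists_succAbove_eq
                (show x ≠ c from hxc)
              refine ⟨z, ?_⟩
              rw [if_neg (fun hzz : z = pos => hx (by rw [← hz, hzz, hpos])), hz]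
      · rw [if_neg hcq]
        obtain ⟨posq, hposq⟩ := Fin.exists_succAbove_eq
          (show q ≠ c from fun h => hcq h.symm)
        have hne : pos ≠ posq := by
          intro h
          apply hqp
          rw [← hposq, ← h, hpos]
        apply Matrix.det_zero_of_column_eq hne.symm
        intro k
        simp only [Matrix.updateCol_apply, Matrix.submatrix_apply, Pi.add_apply]
        simp [hne.symm, hposq]
  have e1 : ∀ i₀, M' i₀ p = M i₀ p + M i₀ q := by
    intro i₀; simp [hM', Matrix.updateCol_apply, hw]
  have e2 : ∀ c, c ≠ p → ∀ i₀, M' i₀ c = M i₀ c := by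
    intro c hc i₀; simp [hM', Matrix.updateCol_apply, hc]
  set X := ∑ i, ∑ j, if i < j then
      (M i p * M j q + M i q * M j p + M i q * M j q)
        * (M.submatrix (skip2 i j) p.succAbove).det else 0 with hX
  set Y := ∑ i, ∑ j, if i < j then
      M i q * M j q * (M.submatrix (skip2 i j) p.succAbove).det else 0 with hY
  have percol : ∀ c : Fin (m + 1),
      (∑ i, ∑ j, if i < j then M' i c * M' j c
          * (M'.submatrix (skip2 i j) c.succAbove).det else 0)
      = (∑ i, ∑ j, if i < j then M i c * M j c
          * (M.submatrix (skip2 i j) c.succAbove).det else 0)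
        + (if c = p then X else if c = q then Y else 0) := by
    intro c
    by_cases hcp : c = p
    · subst hcp
      rw [if_pos rfl, hX, ← Finset.sum_add_distrib]
      refine Finset.sum_congr rfl fun i _ => ?_
      rw [← Finset.sum_add_distrib]
      refine Finset.sum_congr rfl fun j _ => ?_
      rw [minor_p i j, e1 i, e1 j]
      split_ifs with hij
      · ring
      · rw [add_zero]
    · rw [if_neg hcp]
      by_cases hcq : c = q
      · subst hcq
        rw [if_pos rfl, hY, ← Finset.sum_add_distrib]
        refine Finset.sum_congr rfl fun i _ => ?_
        rw [← Finset.sum_add_distrib]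
        refine Finset.sum_congr rfl fun j _ => ?_
        rw [minor_ne _ hcp i j, if_pos rfl, e2 _ hcp i, e2 _ hcp j]
        split_ifs with hij
        · ring
        · rw [add_zero]
      · rw [if_neg hcq, add_zero]
        refine Finset.sum_congr rfl fun i _ => Finset.sum_congr rfl fun j _ => ?_
        rw [minor_ne _ hcp i j, if_neg hcq, add_zero, e2 _ hcp i, e2 _ hcp j]
  have sumIf : (∑ c, if c = p then X else if c = q then Y else 0) = X + Y := by
    have hsplit : ∀ c : Fin (m + 1), (if c = p then X else if c = q then Y else 0)
        = (if c = p then X else 0) + (if c = q then Y else 0) := by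
      intro c
      by_cases hcp : c = p
      · rw [hcp, if_pos rfl, if_pos rfl, if_neg (fun h : p = q => hqp h.symm), add_zero]
      · rw [if_neg hcp, if_neg hcp, zero_add]
    rw [Finset.sum_congr rfl (fun c _ => hsplit c), Finset.sum_add_distrib]
    rw [Finset.sum_ite_eq' Finset.univ p (fun _ => X),
      Finset.sum_ite_eq' Finset.univ q (fun _ => Y)]
    simp
  have hXY : X + Y = 0 := by
    set N := M.submatrix id p.succAbove with hN
    set u := fun i => M i q with hu
    set v := fun i => M i p with hv
    have hcomb : X + Y = (colsAux N u v).det := by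
      rw [det_colsAux N u v, hX, hY, ← Finset.sum_add_distrib]
      refine Finset.sum_congr rfl fun i _ => ?_
      rw [← Finset.sum_add_distrib]
      refine Finset.sum_congr rfl fun j _ => ?_
      have hNs : (N.submatrix (skip2 i j) id) = M.submatrix (skip2 i j) p.succAbove := by
        ext r s; simp [hN]
      rw [hNs]
      split_ifs with hij
      · have expand : (M i p * M j q + M i q * M j p + M i q * M j q)
              * (M.submatrix (skip2 i j) p.succAbove).det
            + M i q * M j q * (M.submatrix (skip2 i j) p.succAbove).det
            = (M i p * M j q + M i q * M j p)
              * (M.submatrix (skip2 i j) p.succAbove).det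
            + (M i q * M j q * (M.submatrix (skip2 i j) p.succAbove).det
               + M i q * M j q * (M.submatrix (skip2 i j) p.succAbove).det) := by
          ring
        rw [expand, CharTwo.add_self_eq_zero, add_zero, hu, hv]
        ring
      · rw [add_zero]
    rw [hcomb]
    obtain ⟨sq, hsq⟩ := Fin.exists_succAbove_eq (show q ≠ p from hqp)
    have hj1 : ((⟨(sq : ℕ), by omega⟩ : Fin (m + 2)) : ℕ) < m := sq.isLt
    apply Matrix.det_zero_of_column_eq
      (show (⟨(sq : ℕ), by omega⟩ : Fin (m + 2)) ≠ ⟨m, by omega⟩ from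
        fun h => by have := congrArg Fin.val h; simp at this; omega)
    intro k
    have h2 : ¬ ((⟨m, by omega⟩ : Fin (m + 2)) : ℕ) < m := by simp
    simp only [colsAux, dif_pos hj1, dif_neg h2, if_pos (show ((⟨m, by omega⟩ : Fin (m + 2)) : ℕ) = m from rfl)]
    simp [hu, hN, Matrix.submatrix_apply, show (⟨((⟨(sq : ℕ), by omega⟩ : Fin (m + 2)) : ℕ), hj1⟩ : Fin m) = sq from Fin.ext rfl, hsq]
  have final : B2 M' = B2 M + (X + Y) := by
    simp only [B2]
    rw [Finset.sum_congr rfl (fun c _ => percol c), Finset.sum_add_distrib, sumIf]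
  rw [final, hXY, add_zero]

lemma B2_update_sum {m : ℕ} (M : Matrix (Fin (m + 2)) (Fin (m + 1)) (ZMod 2)) (k : Fin (m + 1))
    (t : Finset (Fin (m + 1))) (hk : k ∉ t) :
    B2 (M.updateCol k (fun i => M i k + ∑ l ∈ t, M i l)) = B2 M := by
  revert hk
  induction t using Finset.induction_on with
  | empty =>
    intro _
    have h0 : (fun i => M i k + ∑ l ∈ (∅ : Finset (Fin (m + 1))), M i l)
        = fun i => M i k := by
      funext i; simp
    rw [h0, Matrix.updateCol_eq_self]
  | @insert a s hl ih =>
    intro hk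
    have hka : k ≠ a := fun h => hk (h ▸ Finset.mem_insert_self a s)
    have hks : k ∉ s := fun h => hk (Finset.mem_insert_of_mem h)
    set M₁ := M.updateCol k (fun i => M i k + ∑ l ∈ s, M i l) with hM₁
    have step : M.updateCol k (fun i => M i k + ∑ l ∈ insert a s, M i l)
        = M₁.updateCol k (fun i => M₁ i k + M₁ i a) := by
      ext i c
      by_cases hc : c = k
      · subst hc
        simp only [hM₁, Matrix.updateCol_apply, if_pos rfl, if_true, Finset.sum_insert hl,
          if_neg (fun h : a = c => hka h.symm)]
        ring
      · simp [hM₁, Matrix.updateCol_apply, hc]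
    rw [step, B2_update M₁ k a (fun h : a = k => hka h.symm)]
    exact ih hks

lemma exists_ker {m : ℕ} (M : Matrix (Fin (m + 2)) (Fin (m + 1)) (ZMod 2))
    (h : M.rank < m + 1) :
    ∃ c : Fin (m + 1) → ZMod 2, c ≠ 0 ∧ M.mulVec c = 0 := by
  have hrn : M.rank + Module.finrank (ZMod 2) (LinearMap.ker M.mulVecLin) = m + 1 := by
    have h0 := LinearMap.finrank_range_add_finrank_ker M.mulVecLin
    rw [Module.finrank_pi, Fintype.card_fin] at h0
    exact h0
  have hker : LinearMap.ker M.mulVecLin ≠ ⊥ := by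
    intro hbot
    rw [hbot, finrank_bot] at hrn
    omega
  obtain ⟨c, hc, hc0⟩ := (Submodule.ne_bot_iff _).mp hker
  exact ⟨c, hc0, by simpa [Matrix.mulVecLin_apply] using hc⟩

lemma B2_eq_zero {m : ℕ} (M : Matrix (Fin (m + 2)) (Fin (m + 1)) (ZMod 2))
    (h : M.rank < m + 1) : B2 M = 0 := by
  obtain ⟨c, hc0, hck⟩ := exists_ker M h
  obtain ⟨k, hk⟩ : ∃ k, c k ≠ 0 := Function.ne_iff.mp hc0
  have hx : ∀ x : ZMod 2, x = 0 ∨ x = 1 := by decide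
  have hck1 : c k = 1 := (hx (c k)).resolve_left hk
  set t := Finset.univ.filter (fun l => l ≠ k ∧ c l = 1) with ht
  have hkt : k ∉ t := by simp [ht]
  have key : ∀ i, M i k + ∑ l ∈ t, M i l = 0 := by
    intro i
    have h1 : ∑ l, M i l * c l = 0 := by
      have h2 := congrFun hck i
      simpa [Matrix.mulVec, dotProduct] using h2
    have h2 : ∑ l ∈ t, M i l = ∑ l, (if l = k then 0 else M i l * c l) := by
      rw [ht, Finset.sum_filter]
      refine Finset.sum_congr rfl fun l _ => ?_
      by_cases hlk : l = k
      · simp [hlk]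
      · rcases hx (c l) with h0 | h1'
        · simp [hlk, h0]
        · simp [hlk, h1']
    have h3 : ∑ l, (if l = k then 0 else M i l * c l)
        = (∑ l, M i l * c l) - M i k * c k := by
      have hsp : ∀ l, (if l = k then 0 else M i l * c l)
          = M i l * c l - (if l = k then M i l * c l else 0) := by
        intro l; split_ifs <;> simp
      rw [Finset.sum_congr rfl (fun l _ => hsp l), Finset.sum_sub_distrib,
        Finset.sum_ite_eq' Finset.univ k (fun l => M i l * c l)]
      simp
    rw [h2, h3, h1, hck1, mul_one]
    ring
  have upd := B2_update_sum M k t hkt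
  have hzero : M.updateCol k (fun i => M i k + ∑ l ∈ t, M i l)
      = M.updateCol k (fun _ => 0) := by
    have hfun : (fun i => M i k + ∑ l ∈ t, M i l) = (fun _ : Fin (m + 2) => (0 : ZMod 2)) :=
      funext key
    rw [hfun]
  rw [hzero] at upd
  rw [← upd]
  exact B2_zero_col _ k (fun i => by simp [Matrix.updateCol_apply])

/-- If the reduction of `A` modulo `2` has rank strictly less than `n` over
`𝔽₂ = ℤ/2ℤ`, then `B(A) ≡ 0 (mod 2)`. -/
theorem Bcoef_eq_zero_of_rank_lt {m : ℕ} (A : Matrix (Fin (m + 2)) (Fin (m + 1)) ℤ)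
    (h : (A.map (fun x : ℤ => (x : ZMod 2))).rank < m + 1) :
    Bcoef A ≡ 0 [ZMOD 2] := by
  have hcast : ((Bcoef A : ℤ) : ZMod 2) = ((0 : ℤ) : ZMod 2) := by
    rw [Bcoef_cast A, Int.cast_zero]
    exact B2_eq_zero _ h
  exact (ZMod.intCast_eq_intCast_iff _ _ _).mp hcast
end
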